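/- Let μ be any Möbius function for 𝒢. If G is a bipartite finite simple graph with at least one edge and |G| > 2, then μ(K_1, G) = −μ(K_2, G). -/

import Mathlib

open SimpleGraph

/-- A finite simple graph, encoded by its number of vertices together with a
simple graph structure on `Fin n`. -/
def FinGraph : Type := Σ n : ℕ, SimpleGraph (Fin n)

namespace FinGraph

/-- The number of vertices of a graph. -/
def order (G : FinGraph) : ℕ := G.1

/-- Induced containment `H ⊴ G`: there is an injection of the vertices of `H`
into the vertices of `G` which preserves and reflects adjacency (equivalently,
`H` is isomorphic to an induced subgraph of `G`). -/
def Contains (H G : FinGraph) : Prop :=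
  ∃ f : Fin H.1 ↪ Fin G.1, ∀ a b : Fin H.1, G.2.Adj (f a) (f b) ↔ H.2.Adj a b

/-- Isomorphism of finite graphs. -/
def Iso (H G : FinGraph) : Prop := Nonempty (H.2 ≃g G.2)

/-- Package a simple graph on an arbitrary finite vertex type as a `FinGraph`. -/
noncomputable def of {V : Type} [Fintype V] (G : SimpleGraph V) : FinGraph :=
  ⟨Fintype.card V, G.comap ⇑(Fintype.equivFin V).symm⟩

end FinGraph

namespace FinGraph

theorem iso_refl (G : FinGraph) : G.Iso G := ⟨SimpleGraph.Iso.refl⟩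

theorem iso_symm {H G : FinGraph} (h : H.Iso G) : G.Iso H := ⟨h.some.symm⟩

theorem iso_trans {H G K : FinGraph} (h : H.Iso G) (h' : G.Iso K) : H.Iso K :=
  ⟨h.some.trans h'.some⟩

theorem order_eq_of_iso {H G : FinGraph} (h : H.Iso G) : H.1 = G.1 := by
  obtain ⟨e⟩ := h
  simpa using Fintype.card_congr e.toEquiv

theorem contains_refl (G : FinGraph) : G.Contains G :=
  ⟨Function.Embedding.refl _, fun _ _ => Iff.rfl⟩

theorem contains_of_iso {H G : FinGraph} (h : H.Iso G) : H.Contains G := by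
  obtain ⟨e⟩ := h
  exact ⟨e.toEquiv.toEmbedding, fun a b => e.map_rel_iff⟩

theorem contains_trans {H G K : FinGraph} (h : H.Contains G) (h' : G.Contains K) :
    H.Contains K := by
  obtain ⟨f, hf⟩ := h
  obtain ⟨g, hg⟩ := h'
  exact ⟨f.trans g, fun a b => (hg (f a) (f b)).trans (hf a b)⟩

theorem order_le_of_contains {H G : FinGraph} (h : H.Contains G) : H.1 ≤ G.1 := by
  obtain ⟨f, -⟩ := h
  simpa using Fintype.card_le_of_embedding f

theorem iso_of_contains_order_eq {H G : FinGraph} (h : H.Contains G) (hc : H.1 = G.1) :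
    H.Iso G := by
  obtain ⟨f, hf⟩ := h
  have hb : Function.Bijective f :=
    (Fintype.bijective_iff_injective_and_card f).mpr ⟨f.injective, by simp [hc]⟩
  exact ⟨⟨Equiv.ofBijective f hb, fun {a b} => hf a b⟩⟩

/-- An edgeless graph. -/
def E (n : ℕ) : FinGraph := ⟨n, ⊥⟩

theorem edgeless_iso {H G : FinGraph} (hc : H.1 = G.1)
    (hH : ∀ a b, ¬ H.2.Adj a b) (hG : ∀ a b, ¬ G.2.Adj a b) : H.Iso G :=
  ⟨⟨finCongr hc, fun {a b} => iff_of_false (hG _ _) (hH a b)⟩⟩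

/-- The setoid of isomorphism. -/
def isoSetoid : Setoid FinGraph := ⟨Iso, ⟨iso_refl, iso_symm, iso_trans⟩⟩

end FinGraph

namespace FinGraph

abbrev K1 : FinGraph := ⟨1, ⊥⟩
abbrev K2 : FinGraph := ⟨2, (⊤ : SimpleGraph (Fin 2))⟩

theorem K1_contains {G : FinGraph} (h : 0 < G.1) : K1.Contains G := by
  refine ⟨⟨fun _ => ⟨0, h⟩, fun a b _ => Subsingleton.elim a b⟩, fun a b => ?_⟩
  simp [K1]
  exact G.2.irrefl

theorem K1_contains_K2 : K1.Contains K2 := by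
  refine ⟨⟨fun _ => 0, fun a b _ => Subsingleton.elim a b⟩, fun a b => ?_⟩
  simp [K1, K2]
  exact Subsingleton.elim (α := Fin 1) a b

/-- An embedding of a pair of distinct vertices. -/
noncomputable def pairEmb {n : ℕ} {u v : Fin n} (huv : u ≠ v) : Fin 2 ↪ Fin n :=
  ⟨fun i => if i = 0 then u else v, by
    intro a b hab
    fin_cases a <;> fin_cases b <;> simp_all⟩

theorem pairEmb_apply {n : ℕ} {u v : Fin n} (huv : u ≠ v) (i : Fin 2) :
    pairEmb huv i = if i = 0 then u else v := rfl

theorem K2_contains_of_adj {G : FinGraph} {u v : Fin G.1} (h : G.2.Adj u v) :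
    K2.Contains G := by
  refine ⟨pairEmb h.ne, fun a b => ?_⟩
  have hi : ∀ w : Fin G.1, ¬ G.2.Adj w w := fun w => G.2.irrefl
  fin_cases a <;> fin_cases b <;>
    simp_all [pairEmb_apply, K2, h.symm]

theorem adj_of_K2_contains {G : FinGraph} (h : K2.Contains G) :
    ∃ u v, G.2.Adj u v := by
  obtain ⟨f, hf⟩ := h
  refine ⟨f 0, f 1, (hf 0 1).mpr ?_⟩
  simp [K2]

theorem E2_contains_of_not_adj {G : FinGraph} {u v : Fin G.1} (huv : u ≠ v)
    (h : ¬ G.2.Adj u v) : (E 2).Contains G := by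
  refine ⟨pairEmb huv, fun a b => ?_⟩
  have h' : ¬ G.2.Adj v u := fun hh => h hh.symm
  fin_cases a <;> fin_cases b <;>
    simp [pairEmb_apply, E, h, h', G.2.irrefl] <;> assumption

theorem colorable_of_contains {H G : FinGraph} (h : H.Contains G)
    (hG : G.2.Colorable 2) : H.2.Colorable 2 := by
  obtain ⟨f, hf⟩ := h
  obtain ⟨c⟩ := hG
  exact ⟨SimpleGraph.Coloring.mk (fun v => c (f v))
    (fun {a b} hab => c.valid ((hf a b).mpr hab))⟩

theorem not_iso_of_order_ne {H G : FinGraph} (h : H.1 ≠ G.1) : ¬ H.Iso G :=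
  fun hi => h (order_eq_of_iso hi)

end FinGraph

theorem exists_transversal (H G : FinGraph) : ∃ T : Finset FinGraph,
    ((∀ X ∈ T, H.Contains X ∧ X.Contains G) ∧
     (∀ X ∈ T, ∀ Y ∈ T, X ≠ Y → ¬ X.Iso Y) ∧
     (∀ X : FinGraph, H.Contains X → X.Contains G → ∃ Y ∈ T, X.Iso Y)) := by
  classical
  set S : Set FinGraph := {X | H.Contains X ∧ X.Contains G} with hS
  have hfin : S.Finite := by
    have hsub : S ⊆ Set.range (fun p : (Σ n : Fin (G.1+1), SimpleGraph (Fin n.1)) =>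
        (⟨p.1.1, p.2⟩ : FinGraph)) := by
      rintro ⟨n, g⟩ ⟨h1, h2⟩
      have hn : n < G.1 + 1 := Nat.lt_succ_of_le (FinGraph.order_le_of_contains h2)
      exact ⟨⟨⟨n, hn⟩, g⟩, rfl⟩
    exact (Set.finite_range _).subset hsub
  letI s := FinGraph.isoSetoid
  refine ⟨(hfin.toFinset.image (Quotient.mk s)).image Quotient.out, ?_, ?_, ?_⟩
  · intro X hX
    simp only [Finset.mem_image, Set.Finite.mem_toFinset] at hX
    obtain ⟨q, ⟨Z, hZ, hq⟩, hout⟩ := hX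
    have hiso : FinGraph.Iso Z X := by
      have : Quotient.mk s Z = Quotient.mk s X := by rw [hq, ← hout, Quotient.out_eq]
      exact Quotient.exact this
    exact ⟨FinGraph.contains_trans hZ.1 (FinGraph.contains_of_iso hiso),
      FinGraph.contains_trans (FinGraph.contains_of_iso (FinGraph.iso_symm hiso)) hZ.2⟩
  · intro X hX Y hY hne hiso
    simp only [Finset.mem_image, Set.Finite.mem_toFinset] at hX hY
    obtain ⟨qX, -, hqX⟩ := hX
    obtain ⟨qY, -, hqY⟩ := hY
    apply hne
    rw [← hqX, ← hqY]
    congr 1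
    rw [← Quotient.out_eq qX, ← Quotient.out_eq qY, hqX, hqY]
    exact Quotient.sound hiso
  · intro X h1 h2
    refine ⟨Quotient.out (Quotient.mk s X), ?_, ?_⟩
    · simp only [Finset.mem_image, Set.Finite.mem_toFinset]
      exact ⟨Quotient.mk s X, ⟨X, ⟨h1, h2⟩, rfl⟩, rfl⟩
    · have : s.r (Quotient.out (Quotient.mk s X)) X := Quotient.exact (Quotient.out_eq _)
      exact FinGraph.iso_symm this


/-- `T` is a transversal of the interval `[H,G]`: every member lies in `[H,G]`,
distinct members are non-isomorphic, and every graph in `[H,G]` is isomorphic to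
a member of `T`. -/
def IsTransversal (H G : FinGraph) (T : Finset FinGraph) : Prop :=
  (∀ X ∈ T, H.Contains X ∧ X.Contains G) ∧
  (∀ X ∈ T, ∀ Y ∈ T, X ≠ Y → ¬ X.Iso Y) ∧
  (∀ X : FinGraph, H.Contains X → X.Contains G → ∃ Y ∈ T, X.Iso Y)

/-- `mu` is a Möbius function for the poset `𝒢` of all finite simple graphs up to
isomorphism, ordered by induced containment: it is isomorphism invariant, vanishes
on non-comparable pairs, and for every `H ⊴ G` the sum of `mu H ·` over any
transversal of `[H,G]` is `1` if `H ≅ G` and `0` otherwise. -/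
def IsMobius (mu : FinGraph → FinGraph → ℤ) : Prop :=
  (∀ H H' G G' : FinGraph, H.Iso H' → G.Iso G' → mu H G = mu H' G') ∧
  (∀ H G : FinGraph, ¬ H.Contains G → mu H G = 0) ∧
  (∀ H G : FinGraph, H.Contains G → ∀ T : Finset FinGraph, IsTransversal H G T →
    (H.Iso G → ∑ X ∈ T, mu H X = 1) ∧ (¬ H.Iso G → ∑ X ∈ T, mu H X = 0))

open FinGraph

theorem exists_transversal' (H G : FinGraph) : ∃ T, IsTransversal H G T :=
  exists_transversal H G

theorem mu_self {mu : FinGraph → FinGraph → ℤ} (hmu : IsMobius mu)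
    (K : FinGraph) (hcov : ∀ X : FinGraph, K.Contains X → X.Contains K → X.Iso K) :
    mu K K = 1 := by
  classical
  have ht : IsTransversal K K {K} := by
    refine ⟨?_, ?_, ?_⟩
    · intro X hX; rw [Finset.mem_singleton] at hX; rw [hX]
      exact ⟨contains_refl K, contains_refl K⟩
    · intro X hX Y hY hne
      rw [Finset.mem_singleton] at hX hY; exact absurd (hX.trans hY.symm) hne
    · intro X h1 h2
      exact ⟨K, Finset.mem_singleton_self K, hcov X h1 h2⟩
  have := (hmu.2.2 K K (contains_refl K) {K} ht).1 (iso_refl K)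
  simpa using this

theorem mu_K1_K1 {mu : FinGraph → FinGraph → ℤ} (hmu : IsMobius mu) : mu K1 K1 = 1 := by
  apply mu_self hmu
  intro X h1 h2
  exact iso_of_contains_order_eq h2
    (le_antisymm (order_le_of_contains h2) (order_le_of_contains h1))

theorem mu_K2_K2 {mu : FinGraph → FinGraph → ℤ} (hmu : IsMobius mu) : mu K2 K2 = 1 := by
  apply mu_self hmu
  intro X h1 h2
  exact iso_of_contains_order_eq h2
    (le_antisymm (order_le_of_contains h2) (order_le_of_contains h1))

theorem mu_K1_K2 {mu : FinGraph → FinGraph → ℤ} (hmu : IsMobius mu) : mu K1 K2 = -1 := by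
  classical
  have hne : K1 ≠ K2 := by
    intro h
    have := congrArg (fun X : FinGraph => X.1) h
    simp at this
  have ht : IsTransversal K1 K2 {K1, K2} := by
    refine ⟨?_, ?_, ?_⟩
    · intro X hX
      rw [Finset.mem_insert, Finset.mem_singleton] at hX
      rcases hX with h | h <;> subst h
      · exact ⟨contains_refl K1, K1_contains_K2⟩
      · exact ⟨K1_contains_K2, contains_refl K2⟩
    · intro X hX Y hY hxy
      rw [Finset.mem_insert, Finset.mem_singleton] at hX hY
      rcases hX with h | h <;> rcases hY with h' | h' <;> subst h <;> subst h' <;>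
        first
        | exact absurd rfl hxy
        | exact not_iso_of_order_ne (by simp)
    · intro X h1 h2
      have hle1 : 1 ≤ X.1 := order_le_of_contains h1
      have hle2 : X.1 ≤ 2 := order_le_of_contains h2
      interval_cases h : X.1
      · exact ⟨K1, by simp, iso_symm (iso_of_contains_order_eq h1 h.symm)⟩
      · exact ⟨K2, by simp, iso_of_contains_order_eq h2 h⟩
  have hsum := (hmu.2.2 K1 K2 K1_contains_K2 {K1, K2} ht).2 (not_iso_of_order_ne (by simp))
  rw [Finset.sum_pair hne, mu_K1_K1 hmu] at hsum
  omega

theorem key {mu : FinGraph → FinGraph → ℤ} (hmu : IsMobius mu) :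
    ∀ n : ℕ, ∀ G : FinGraph, G.1 ≤ n → G.2.Colorable 2 →
    (∃ u v : Fin G.1, G.2.Adj u v) → 2 < G.1 → mu K1 G + mu K2 G = 0 := by
  intro n
  induction n with
  | zero => intro G hG _ _ h2; omega
  | succ n ih =>
    intro G hGn hbip hedge h2
    classical
    obtain ⟨u0, v0, huv⟩ := hedge
    have hK1G : K1.Contains G := K1_contains (by omega)
    have hK2G : K2.Contains G := K2_contains_of_adj huv
    obtain ⟨T, hT⟩ := exists_transversal' K1 G
    have hK1nG : ¬ K1.Iso G := not_iso_of_order_ne (by show (1:ℕ) ≠ G.1; omega)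
    have hK2nG : ¬ K2.Iso G := not_iso_of_order_ne (by show (2:ℕ) ≠ G.1; omega)
    have sum1 : ∑ X ∈ T, mu K1 X = 0 := (hmu.2.2 K1 G hK1G T hT).2 hK1nG
    set T2 := T.filter (fun X => K2.Contains X) with hT2def
    set T0 := T.filter (fun X => ¬ K2.Contains X) with hT0def
    have hT2 : IsTransversal K2 G T2 := by
      refine ⟨?_, ?_, ?_⟩
      · intro X hX
        rw [hT2def, Finset.mem_filter] at hX
        exact ⟨hX.2, (hT.1 X hX.1).2⟩
      · intro X hX Y hY
        exact hT.2.1 X (Finset.mem_of_mem_filter _ hX) Y (Finset.mem_of_mem_filter _ hY)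
      · intro X h1 h2'
        obtain ⟨Y, hY, hiso⟩ := hT.2.2 X (contains_trans K1_contains_K2 h1) h2'
        refine ⟨Y, ?_, hiso⟩
        rw [hT2def, Finset.mem_filter]
        exact ⟨hY, contains_trans h1 (contains_of_iso hiso)⟩
    have sum2 : ∑ X ∈ T2, mu K2 X = 0 := (hmu.2.2 K2 G hK2G T2 hT2).2 hK2nG
    have hE2G : (E 2).Contains G := by
      obtain ⟨c⟩ := hbip
      obtain ⟨u, v, hne, hc⟩ := Fintype.exists_ne_map_eq_of_card_lt
        (f := fun x : Fin G.1 => c x) (by simpa using h2)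
      exact E2_contains_of_not_adj hne (fun ha => c.valid ha hc)
    have hK1E2 : K1.Contains (E 2) := K1_contains (by norm_num [E])
    obtain ⟨Y2, hY2T, hY2iso⟩ := hT.2.2 (E 2) hK1E2 hE2G
    have hY2noK2 : ¬ K2.Contains Y2 := by
      intro h
      obtain ⟨a, b, hab⟩ :=
        adj_of_K2_contains (contains_trans h (contains_of_iso (iso_symm hY2iso)))
      exact hab
    have hY2T0 : Y2 ∈ T0 := by rw [hT0def, Finset.mem_filter]; exact ⟨hY2T, hY2noK2⟩
    have hY2ord : Y2.1 = 2 := (order_eq_of_iso hY2iso).symm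
    obtain ⟨M, hMT0, hMmax⟩ := T0.exists_max_image (fun X => X.1) ⟨Y2, hY2T0⟩
    have hMT : M ∈ T := Finset.mem_of_mem_filter _ hMT0
    have hMnoK2 : ¬ K2.Contains M := by
      rw [hT0def, Finset.mem_filter] at hMT0; exact hMT0.2
    have hMedge : ∀ a b, ¬ M.2.Adj a b := fun a b hab => hMnoK2 (K2_contains_of_adj hab)
    have hM2 : 2 ≤ M.1 := by have := hMmax Y2 hY2T0; omega
    have hT0t : IsTransversal K1 M T0 := by
      refine ⟨?_, ?_, ?_⟩
      · intro X hX
        have hmax := hMmax X hX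
        rw [hT0def, Finset.mem_filter] at hX
        refine ⟨(hT.1 X hX.1).1,
          ⟨Fin.castLEEmb hmax, fun a b => iff_of_false (hMedge _ _)
            (fun hab => hX.2 (K2_contains_of_adj hab))⟩⟩
      · intro X hX Y hY
        exact hT.2.1 X (Finset.mem_of_mem_filter _ hX) Y (Finset.mem_of_mem_filter _ hY)
      · intro X h1 h2'
        have hXG : X.Contains G := contains_trans h2' (hT.1 M hMT).2
        obtain ⟨Y, hYT, hiso⟩ := hT.2.2 X h1 hXG
        have hXedgeless : ∀ a b, ¬ X.2.Adj a b := by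
          intro a b hab
          obtain ⟨f, hf⟩ := h2'
          exact hMedge _ _ ((hf a b).mpr hab)
        have hYnoK2 : ¬ K2.Contains Y := by
          intro h
          obtain ⟨a, b, hab⟩ :=
            adj_of_K2_contains (contains_trans h (contains_of_iso (iso_symm hiso)))
          exact hXedgeless a b hab
        exact ⟨Y, by rw [hT0def, Finset.mem_filter]; exact ⟨hYT, hYnoK2⟩, hiso⟩
    have sum0 : ∑ X ∈ T0, mu K1 X = 0 :=
      (hmu.2.2 K1 M (hT.1 M hMT).1 T0 hT0t).2
        (not_iso_of_order_ne (by show (1:ℕ) ≠ M.1; omega))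
    have hsplit : ∑ X ∈ T2, mu K1 X + ∑ X ∈ T0, mu K1 X = ∑ X ∈ T, mu K1 X := by
      rw [hT2def, hT0def]
      exact Finset.sum_filter_add_sum_filter_not T _ _
    have sum1' : ∑ X ∈ T2, mu K1 X = 0 := by omega
    have sumf : ∑ X ∈ T2, (mu K1 X + mu K2 X) = 0 := by
      rw [Finset.sum_add_distrib, sum1', sum2]; ring
    obtain ⟨Y0, hY0T2, hY0iso⟩ := hT2.2.2 G hK2G (contains_refl G)
    have hY0T : Y0 ∈ T := Finset.mem_of_mem_filter _ hY0T2
    have hzero : ∀ X ∈ T2, X ≠ Y0 → mu K1 X + mu K2 X = 0 := by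
      intro X hX hne
      have hXT : X ∈ T := Finset.mem_of_mem_filter _ hX
      have hK2X : K2.Contains X := by
        rw [hT2def, Finset.mem_filter] at hX; exact hX.2
      have hXG : X.Contains G := (hT.1 X hXT).2
      have hXnG : ¬ X.Iso G := fun h =>
        hT.2.1 X hXT Y0 hY0T hne (iso_trans h hY0iso)
      have hXlt : X.1 < G.1 := lt_of_le_of_ne (order_le_of_contains hXG)
        (fun h => hXnG (iso_of_contains_order_eq hXG h))
      have hX2 : 2 ≤ X.1 := order_le_of_contains hK2X
      rcases eq_or_lt_of_le hX2 with h2' | h2'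
      · have hiso : K2.Iso X := iso_of_contains_order_eq hK2X h2'
        have e1 : mu K1 X = mu K1 K2 := hmu.1 K1 K1 X K2 (iso_refl K1) (iso_symm hiso)
        have e2 : mu K2 X = mu K2 K2 := hmu.1 K2 K2 X K2 (iso_refl K2) (iso_symm hiso)
        rw [e1, e2, mu_K1_K2 hmu, mu_K2_K2 hmu]; ring
      · exact ih X (by omega) (colorable_of_contains hXG hbip)
          (adj_of_K2_contains hK2X) h2'
    have hY0 : mu K1 Y0 + mu K2 Y0 = 0 := by
      have hsp := Finset.add_sum_erase T2 (fun X => mu K1 X + mu K2 X) hY0T2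
      have hz : ∑ X ∈ T2.erase Y0, (mu K1 X + mu K2 X) = 0 :=
        Finset.sum_eq_zero (fun X hX =>
          hzero X (Finset.mem_of_mem_erase hX) (Finset.ne_of_mem_erase hX))
      rw [hz, sumf] at hsp
      simpa using hsp
    have e1 : mu K1 G = mu K1 Y0 := hmu.1 K1 K1 G Y0 (iso_refl K1) hY0iso
    have e2 : mu K2 G = mu K2 Y0 := hmu.1 K2 K2 G Y0 (iso_refl K2) hY0iso
    omega


/-- If `G` is bipartite with at least one edge and `|G| > 2`, then
`μ(K_1,G) = -μ(K_2,G)`. -/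
theorem mobius_K1_eq_neg_mobius_K2 (mu : FinGraph → FinGraph → ℤ)
    (hmu : IsMobius mu) (G : FinGraph) (hbip : G.2.Colorable 2)
    (hedge : ∃ u v : Fin G.1, G.2.Adj u v) (hcard : 2 < G.order) :
    mu ⟨1, (⊥ : SimpleGraph (Fin 1))⟩ G = - mu ⟨2, (⊤ : SimpleGraph (Fin 2))⟩ G := by
  have h := key hmu G.1 G le_rfl hbip hedge hcard
  simp only [FinGraph.K1, FinGraph.K2] at h
  omega
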